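/- arXiv:1306.3452 — 9 statements merged into one kernel-verified Lean document; each statement's English description precedes it below -/
import Mathlib

section
/- Let P be a finite set of real numbers and let T = {T_1, ..., T_m} be a t-tolerant Tverberg m-partition of P with m ≥ 2. Then for any two distinct indices i ≠ j, |T_i ∪ T_j| ≥ 2t+3. -/
lemma helper_max (t : ℕ) (A B : Finset ℝ) (hd : Disjoint A B) (hA : t + 1 ≤ A.card)
    (M : ℝ) (hM : M ∈ B) (hMmax : ∀ y ∈ A, y ≤ M) (x : ℝ)
    (hxA : x ∈ convexHull ℝ ((A \ B.erase M : Finset ℝ) : Set ℝ))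
    (hxB : x ∈ convexHull ℝ ((B \ B.erase M : Finset ℝ) : Set ℝ)) : False := by
  have hBe : B \ B.erase M = {M} := by
    ext y
    simp only [Finset.mem_sdiff, Finset.mem_erase, Finset.mem_singleton]
    constructor
    · rintro ⟨hy, hy'⟩
      by_contra hne
      exact hy' ⟨hne, hy⟩
    · rintro rfl
      exact ⟨hM, fun h => h.1 rfl⟩
  have hAe : A \ B.erase M = A := by
    apply Finset.sdiff_eq_self_of_disjoint
    exact hd.mono_right (Finset.erase_subset _ _)
  rw [hBe] at hxB
  rw [hAe] at hxA
  simp only [Finset.coe_singleton, convexHull_singleton, Set.mem_singleton_iff] at hxB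
  subst hxB
  have hAne : A.Nonempty := Finset.card_pos.mp (by omega)
  have ha : A.max' hAne ∈ A := A.max'_mem hAne
  have hle : x ≤ A.max' hAne := by
    have hsub : (A : Set ℝ) ⊆ Set.Iic (A.max' hAne) := fun y hy =>
      A.le_max' y hy
    exact convexHull_min hsub (convex_Iic (A.max' hAne)) hxA
  have hlt : A.max' hAne < x := by
    have h1 : A.max' hAne ≤ x := hMmax _ ha
    have h2 : A.max' hAne ≠ x := by
      intro h
      exact (Finset.disjoint_left.mp hd ha) (h ▸ hM)
    exact lt_of_le_of_ne h1 h2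
  linarith

/-- In a `t`-tolerant Tverberg `m`-partition (`m ≥ 2`) of a finite set of reals,
any two distinct parts together have at least `2t + 3` elements. -/
theorem stmt_1 (m t : ℕ) (hm : 2 ≤ m) (P : Finset ℝ) (T : Fin m → Finset ℝ)
    (hdisj : ∀ i j : Fin m, i ≠ j → Disjoint (T i) (T j))
    (hcover : Finset.univ.biUnion T = P)
    (htol : ∀ R ⊆ P, R.card ≤ t →
      ∃ x : ℝ, ∀ i : Fin m, x ∈ convexHull ℝ ((T i \ R : Finset ℝ) : Set ℝ)) :
    ∀ i j : Fin m, i ≠ j → 2 * t + 3 ≤ (T i ∪ T j).card := by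
  intro i j hij
  by_contra h
  push_neg at h
  have hd := hdisj i j hij
  have hsubP : ∀ k : Fin m, T k ⊆ P := by
    intro k x hx
    rw [← hcover]
    exact Finset.mem_biUnion.mpr ⟨k, Finset.mem_univ k, hx⟩
  have hcard : (T i).card + (T j).card ≤ 2 * t + 2 := by
    rw [← Finset.card_union_of_disjoint hd]
    omega
  have hbig : ∀ k : Fin m, t + 1 ≤ (T k).card := by
    intro k
    by_contra hk
    push_neg at hk
    obtain ⟨x, hx⟩ := htol (T k) (hsubP k) (by omega)
    have := hx k
    simp [Finset.sdiff_self] at this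
  have hUne : (T i ∪ T j).Nonempty := by
    have := hbig i
    have : (T i).Nonempty := Finset.card_pos.mp (by omega)
    exact this.mono Finset.subset_union_left
  set M := (T i ∪ T j).max' hUne with hMdef
  have hMmem : M ∈ T i ∪ T j := Finset.max'_mem _ _
  have hMmax : ∀ y ∈ T i ∪ T j, y ≤ M := fun y hy => Finset.le_max' _ y hy
  rcases Finset.mem_union.mp hMmem with hMi | hMj
  · -- M ∈ T i, remove (T i).erase M
    have hcardR : ((T i).erase M).card = (T i).card - 1 :=
      Finset.card_erase_of_mem hMi
    obtain ⟨x, hx⟩ := htol ((T i).erase M)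
      ((Finset.erase_subset _ _).trans (hsubP i))
      (by have := hbig i; have := hbig j; omega)
    exact helper_max t (T j) (T i) hd.symm (hbig j) M hMi
      (fun y hy => hMmax y (Finset.mem_union_right _ hy)) x (hx j) (hx i)
  · have hcardR : ((T j).erase M).card = (T j).card - 1 :=
      Finset.card_erase_of_mem hMj
    obtain ⟨x, hx⟩ := htol ((T j).erase M)
      ((Finset.erase_subset _ _).trans (hsubP j))
      (by have := hbig i; have := hbig j; omega)
    exact helper_max t (T i) (T j) hd (hbig i) M hMj
      (fun y hy => hMmax y (Finset.mem_union_left _ hy)) x (hx i) (hx j)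
end

section
/- Let P be a finite set of real numbers with |P| < m(t+2) - 1, where m ≥ 2. Then P has no t-tolerant Tverberg m-partition. -/
/-- A finite set of reals with fewer than `m(t+2) - 1` points (`m ≥ 2`) has no
`t`-tolerant Tverberg `m`-partition. -/
theorem stmt_2 (m t : ℕ) (hm : 2 ≤ m) (P : Finset ℝ) (hP : P.card < m * (t + 2) - 1) :
    ¬ ∃ T : Fin m → Finset ℝ,
      (∀ i j : Fin m, i ≠ j → Disjoint (T i) (T j)) ∧
      Finset.univ.biUnion T = P ∧
      (∀ R ⊆ P, R.card ≤ t →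
        ∃ x : ℝ, ∀ i : Fin m, x ∈ convexHull ℝ ((T i \ R : Finset ℝ) : Set ℝ)) := by
  rintro ⟨T, hdisj, hcover, hx⟩
  have hsub : ∀ i, T i ⊆ P := by
    intro i
    rw [← hcover]
    exact Finset.subset_biUnion_of_mem T (Finset.mem_univ i)
  -- Each part has at least t+1 points
  have hlow : ∀ i, t + 1 ≤ (T i).card := by
    intro i
    by_contra h
    push_neg at h
    obtain ⟨x, hxi⟩ := hx (T i) (hsub i) (by omega)
    have := hxi i
    rw [Finset.sdiff_self] at this
    simp at this
  -- Key: if i ≠ j and p ∈ T i is a minimum of T i ∪ T j, then |T i| ≥ t+2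
  have key : ∀ i j : Fin m, i ≠ j → ∀ p, p ∈ T i →
      (∀ q ∈ T i ∪ T j, p ≤ q) → t + 2 ≤ (T i).card := by
    intro i j hij p hp hmin
    by_contra h
    push_neg at h
    have hcard : ((T i).erase p).card ≤ t := by
      rw [Finset.card_erase_of_mem hp]; omega
    obtain ⟨x, hxx⟩ :=
      hx ((T i).erase p) ((Finset.erase_subset _ _).trans (hsub i)) hcard
    have h1 := hxx i
    have h2 := hxx j
    have hti : (T i \ (T i).erase p) = {p} := by
      ext a
      simp only [Finset.mem_sdiff, Finset.mem_erase, Finset.mem_singleton, not_and]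
      constructor
      · rintro ⟨ha, hb⟩
        by_contra hne
        exact hb hne ha
      · rintro rfl
        exact ⟨hp, fun hne _ => hne rfl⟩
    have htj : (T j \ (T i).erase p) = T j := by
      rw [Finset.sdiff_eq_self_iff_disjoint]
      exact Finset.disjoint_of_subset_right (Finset.erase_subset _ _) (hdisj j i hij.symm)
    rw [hti] at h1
    rw [htj] at h2
    simp only [Finset.coe_singleton, convexHull_singleton, Set.mem_singleton_iff] at h1
    subst h1
    have hjne : (T j).Nonempty := Finset.card_pos.mp (by have := hlow j; omega)
    set q := (T j).min' hjne with hq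
    have hq' : q ∈ T j := Finset.min'_mem _ _
    have hpq : x < q := by
      have hle : x ≤ q := hmin q (Finset.mem_union_right _ hq')
      have hne : x ≠ q := fun he =>
        (Finset.disjoint_left.mp (hdisj i j hij) hp) (he ▸ hq')
      exact lt_of_le_of_ne hle hne
    have hmem : x ∈ Set.Ici q := by
      refine convexHull_min ?_ (convex_Ici q) h2
      intro a ha
      simp only [Finset.coe_sort_coe, Finset.mem_coe] at ha
      exact Finset.min'_le _ _ ha
    rw [Set.mem_Ici] at hmem
    linarith
  -- At most one part has fewer than t+2 points
  have hone : ∀ i j : Fin m, i ≠ j → t + 2 ≤ (T i).card ∨ t + 2 ≤ (T j).card := by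
    intro i j hij
    have hne : (T i ∪ T j).Nonempty := by
      have : (T i).Nonempty := Finset.card_pos.mp (by have := hlow i; omega)
      exact this.mono Finset.subset_union_left
    set p := (T i ∪ T j).min' hne with hp
    have hpmem := Finset.min'_mem _ hne
    have hmin : ∀ q ∈ T i ∪ T j, p ≤ q := fun q hq => Finset.min'_le _ _ hq
    rcases Finset.mem_union.mp hpmem with h | h
    · exact Or.inl (key i j hij p h hmin)
    · refine Or.inr (key j i hij.symm p h ?_)
      intro q hq
      exact hmin q (by rwa [Finset.union_comm])
  -- Counting
  have hcardP : P.card = ∑ i, (T i).card := by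
    rw [← hcover, Finset.card_biUnion]
    intro i _ j _ hij
    exact hdisj i j hij
  by_cases hex : ∃ i, (T i).card ≤ t + 1
  · obtain ⟨i0, hi0⟩ := hex
    have hrest : ∀ j ∈ Finset.univ.erase i0, t + 2 ≤ (T j).card := by
      intro j hj
      rcases hone j i0 (Finset.ne_of_mem_erase hj) with h | h
      · exact h
      · omega
    have hsum : ∑ i, (T i).card = (T i0).card + ∑ j ∈ Finset.univ.erase i0, (T j).card :=
      (Finset.add_sum_erase _ _ (Finset.mem_univ i0)).symm
    have hsum2 : (m - 1) * (t + 2) ≤ ∑ j ∈ Finset.univ.erase i0, (T j).card := by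
      have hc : (Finset.univ.erase i0).card = m - 1 := by
        rw [Finset.card_erase_of_mem (Finset.mem_univ i0), Finset.card_univ,
          Fintype.card_fin]
      calc (m - 1) * (t + 2) = (Finset.univ.erase i0).card * (t + 2) := by rw [hc]
        _ ≤ _ := by
            simpa using Finset.card_nsmul_le_sum (Finset.univ.erase i0) _ _ hrest
    have hA : (m - 1) * (t + 2) = m * (t + 2) - (t + 2) := Nat.sub_one_mul _ _
    rw [hA] at hsum2
    have := hlow i0
    omega
  · push_neg at hex
    have hsum2 : m * (t + 2) ≤ ∑ i, (T i).card := by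
      calc m * (t + 2) = (Finset.univ : Finset (Fin m)).card * (t + 2) := by simp
        _ ≤ _ := by
            simpa using Finset.card_nsmul_le_sum Finset.univ _ _ (fun i _ => show t + 2 ≤ (T i).card by have := hex i; omega)
    omega
end

section
/- Let P ⊂ ℝ be a set of m(t+2) - 1 distinct real numbers, and let T = {T_1,...,T_m} be a partition of P such that |T_1| = t+1, and writing T_1 = {p_1 < p_2 < ... < p_{t+1}}, each of the t+2 open intervals (-∞, p_1), (p_1, p_2), ..., (p_{t+1}, ∞) contains exactly one point of T_i for every i = 2,...,m. Then T is a t-tolerant Tverberg m-partition of P. -/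
/-- If `P ⊂ ℝ` has `m(t+2) - 1` points and `T` is a partition of `P` such that
`T 0 = {p 1 < ... < p (t+1)}` has `t+1` points and each of the `t+2` open intervals
determined by `T 0` contains exactly one point of every other part, then `T` is a
`t`-tolerant Tverberg `m`-partition of `P`. -/
theorem stmt_3 (m t : ℕ) (hm : 1 ≤ m) (P : Finset ℝ) (hP : P.card = m * (t + 2) - 1)
    (T : Fin m → Finset ℝ)
    (hdisj : ∀ i j : Fin m, i ≠ j → Disjoint (T i) (T j))
    (hcover : Finset.univ.biUnion T = P)
    (p : Fin (t + 1) → ℝ) (hp : StrictMono p)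
    (hT1 : T ⟨0, hm⟩ = Finset.image p Finset.univ)
    (hlow : ∀ i : Fin m, i ≠ ⟨0, hm⟩ →
      ((T i).filter (fun x => x < p 0)).card = 1)
    (hmid : ∀ i : Fin m, i ≠ ⟨0, hm⟩ → ∀ k : Fin t,
      ((T i).filter (fun x => p k.castSucc < x ∧ x < p k.succ)).card = 1)
    (hhigh : ∀ i : Fin m, i ≠ ⟨0, hm⟩ →
      ((T i).filter (fun x => p (Fin.last t) < x)).card = 1) :
    ∀ R ⊆ P, R.card ≤ t →
      ∃ x : ℝ, ∀ i : Fin m, x ∈ convexHull ℝ ((T i \ R : Finset ℝ) : Set ℝ) := by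
  classical
  intro R hR hRcard
  set z : Fin m := ⟨0, hm⟩ with hz
  have hpmem : ∀ j : Fin (t+1), p j ∈ T z := by
    intro j; rw [hT1]; exact Finset.mem_image_of_mem p (Finset.mem_univ j)
  have pnotin : ∀ (j : Fin (t+1)) (i : Fin m), i ≠ z → p j ∉ T i := by
    intro j i hi hmem
    exact (Finset.disjoint_left.mp (hdisj z i (Ne.symm hi))) (hpmem j) hmem
  -- cardinality of lower filters
  have Lcard : ∀ i : Fin m, i ≠ z → ∀ (n : ℕ) (hn : n < t+1),
      ((T i).filter (fun x => x < p ⟨n, hn⟩)).card = n + 1 := by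
    intro i hi n
    induction n with
    | zero =>
      intro hn
      have e : (⟨0, hn⟩ : Fin (t+1)) = 0 := Fin.ext (by simp)
      rw [e]; exact hlow i hi
    | succ n ih =>
      intro hn
      have hn' : n < t + 1 := by omega
      have hk : n < t := by omega
      have hmid' := hmid i hi ⟨n, hk⟩
      have e1 : (Fin.castSucc ⟨n, hk⟩ : Fin (t+1)) = ⟨n, hn'⟩ := by
        apply Fin.ext; simp
      have e2 : (Fin.succ ⟨n, hk⟩ : Fin (t+1)) = ⟨n+1, hn⟩ := by
        apply Fin.ext; simp
      rw [e1, e2] at hmid'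
      have hsplit : (T i).filter (fun x => x < p ⟨n+1, hn⟩) =
          (T i).filter (fun x => x < p ⟨n, hn'⟩) ∪
          (T i).filter (fun x => p ⟨n, hn'⟩ < x ∧ x < p ⟨n+1, hn⟩) := by
        ext x
        simp only [Finset.mem_filter, Finset.mem_union]
        constructor
        · rintro ⟨hx, hlt⟩
          rcases lt_trichotomy x (p ⟨n, hn'⟩) with h | h | h
          · exact Or.inl ⟨hx, h⟩
          · exact absurd hx (h ▸ pnotin ⟨n, hn'⟩ i hi)
          · exact Or.inr ⟨hx, h, hlt⟩
        · rintro (⟨hx, h⟩ | ⟨hx, h1, h2⟩)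
          · exact ⟨hx, h.trans (hp (by simp [Fin.lt_def]))⟩
          · exact ⟨hx, h2⟩
      have hdis : Disjoint ((T i).filter (fun x => x < p ⟨n, hn'⟩))
          ((T i).filter (fun x => p ⟨n, hn'⟩ < x ∧ x < p ⟨n+1, hn⟩)) := by
        rw [Finset.disjoint_left]
        rintro x hx1 hx2
        simp only [Finset.mem_filter] at hx1 hx2
        exact absurd (hx1.2.trans hx2.2.1) (lt_irrefl x)
      rw [hsplit, Finset.card_union_of_disjoint hdis, ih hn', hmid']
  have cardTi : ∀ i : Fin m, i ≠ z → (T i).card = t + 2 := by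
    intro i hi
    have hlast : (Fin.last t) = ⟨t, Nat.lt_succ_self t⟩ := rfl
    have hsplit : T i = (T i).filter (fun x => x < p (Fin.last t)) ∪
        (T i).filter (fun x => p (Fin.last t) < x) := by
      ext x
      simp only [Finset.mem_filter, Finset.mem_union]
      constructor
      · intro hx
        rcases lt_trichotomy x (p (Fin.last t)) with h | h | h
        · exact Or.inl ⟨hx, h⟩
        · exact absurd hx (h ▸ pnotin (Fin.last t) i hi)
        · exact Or.inr ⟨hx, h⟩
      · rintro (⟨hx, _⟩ | ⟨hx, _⟩) <;> exact hx
    have hdis : Disjoint ((T i).filter (fun x => x < p (Fin.last t)))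
        ((T i).filter (fun x => p (Fin.last t) < x)) := by
      rw [Finset.disjoint_left]
      rintro x hx1 hx2
      simp only [Finset.mem_filter] at hx1 hx2
      exact absurd (hx1.2.trans hx2.2) (lt_irrefl x)
    rw [hsplit, Finset.card_union_of_disjoint hdis, hhigh i hi, hlast,
      Lcard i hi t (Nat.lt_succ_self t)]
  have Hcard : ∀ i : Fin m, i ≠ z → ∀ j : Fin (t+1),
      ((T i).filter (fun x => p j < x)).card = t + 1 - (j : ℕ) := by
    intro i hi j
    have hsplit : T i = (T i).filter (fun x => x < p j) ∪
        (T i).filter (fun x => p j < x) := by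
      ext x
      simp only [Finset.mem_filter, Finset.mem_union]
      constructor
      · intro hx
        rcases lt_trichotomy x (p j) with h | h | h
        · exact Or.inl ⟨hx, h⟩
        · exact absurd hx (h ▸ pnotin j i hi)
        · exact Or.inr ⟨hx, h⟩
      · rintro (⟨hx, _⟩ | ⟨hx, _⟩) <;> exact hx
    have hdis : Disjoint ((T i).filter (fun x => x < p j))
        ((T i).filter (fun x => p j < x)) := by
      rw [Finset.disjoint_left]
      rintro x hx1 hx2
      simp only [Finset.mem_filter] at hx1 hx2
      exact absurd (hx1.2.trans hx2.2) (lt_irrefl x)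
    have h1 : (T i).card = ((T i).filter (fun x => x < p j)).card +
        ((T i).filter (fun x => p j < x)).card := by
      conv_lhs => rw [hsplit]
      exact Finset.card_union_of_disjoint hdis
    have h2 : ((T i).filter (fun x => x < p j)).card = (j : ℕ) + 1 := by
      have := Lcard i hi (j : ℕ) j.isLt
      simpa using this
    have h3 := cardTi i hi
    have hj := j.isLt
    omega
  -- bad sets
  set bad : Fin m → Finset (Fin (t+1)) := fun i =>
    if i = z then Finset.univ.filter (fun j => p j ∈ R)
    else Finset.univ.filter (fun j => (T i).filter (fun x => x < p j) ⊆ R ∨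
      (T i).filter (fun x => p j < x) ⊆ R) with hbad
  have key : ∀ i : Fin m, (bad i).card ≤ (R ∩ T i).card := by
    intro i
    by_cases hi : i = z
    · subst hi
      simp only [hbad, if_pos rfl]
      apply Finset.card_le_card_of_injOn (fun j => p j)
      · intro j hj
        rw [Finset.mem_coe, Finset.mem_filter] at hj
        exact Finset.mem_inter.mpr ⟨hj.2, hpmem j⟩
      · intro a _ b _ hab
        exact hp.injective hab
    · simp only [hbad, if_neg hi]
      set Slo := Finset.univ.filter (fun j : Fin (t+1) => (T i).filter (fun x => x < p j) ⊆ R)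
        with hSlo
      set Shi := Finset.univ.filter (fun j : Fin (t+1) => (T i).filter (fun x => p j < x) ⊆ R)
        with hShi
      have hunion : Finset.univ.filter (fun j : Fin (t+1) =>
          (T i).filter (fun x => x < p j) ⊆ R ∨ (T i).filter (fun x => p j < x) ⊆ R)
          = Slo ∪ Shi := Finset.filter_or _ _ _
      rw [hunion]
      have hlosub : ∀ a ∈ Slo, Slo ⊆ Finset.Iic a ∨ True := fun _ _ => Or.inr trivial
      -- bounds for Slo
      have hSloCard : ∀ a ∈ Slo, Slo.card ≤ (a : ℕ) + 1 → True := fun _ _ _ => trivial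
      have hSloBound : ∀ a, a ∈ Slo → (∀ b ∈ Slo, b ≤ a) →
          Slo.card ≤ ((T i).filter (fun x => x < p a)).card ∧
          (T i).filter (fun x => x < p a) ⊆ R ∩ T i := by
        intro a ha hmax
        constructor
        · have h1 : Slo ⊆ Finset.Iic a := fun b hb => Finset.mem_Iic.mpr (hmax b hb)
          calc Slo.card ≤ (Finset.Iic a).card := Finset.card_le_card h1
            _ = (a : ℕ) + 1 := Fin.card_Iic a
            _ = ((T i).filter (fun x => x < p a)).card := by
                have := Lcard i hi (a : ℕ) a.isLt
                simp at this ⊢; omega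
        · intro x hx
          simp only [hSlo, Finset.mem_filter] at ha
          exact Finset.mem_inter.mpr ⟨ha.2 hx, (Finset.mem_filter.mp hx).1⟩
      have hShiBound : ∀ b, b ∈ Shi → (∀ a ∈ Shi, b ≤ a) →
          Shi.card ≤ ((T i).filter (fun x => p b < x)).card ∧
          (T i).filter (fun x => p b < x) ⊆ R ∩ T i := by
        intro b hb hmin
        constructor
        · have h1 : Shi ⊆ Finset.Ici b := fun a ha => Finset.mem_Ici.mpr (hmin a ha)
          calc Shi.card ≤ (Finset.Ici b).card := Finset.card_le_card h1
            _ = (t + 1) - (b : ℕ) := Fin.card_Ici b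
            _ = ((T i).filter (fun x => p b < x)).card := (Hcard i hi b).symm
        · intro x hx
          simp only [hShi, Finset.mem_filter] at hb
          exact Finset.mem_inter.mpr ⟨hb.2 hx, (Finset.mem_filter.mp hx).1⟩
      by_cases hlo : Slo.Nonempty
      · by_cases hhi' : Shi.Nonempty
        · set a := Slo.max' hlo with ha
          set b := Shi.min' hhi' with hb
          have haS : a ∈ Slo := Slo.max'_mem hlo
          have hbS : b ∈ Shi := Shi.min'_mem hhi'
          have ⟨hc1, hc2⟩ := hSloBound a haS (fun c hc => Slo.le_max' c hc)
          have ⟨hc3, hc4⟩ := hShiBound b hbS (fun c hc => Shi.min'_le c hc)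
          by_cases hab : a < b
          · have hdis : Disjoint ((T i).filter (fun x => x < p a))
                ((T i).filter (fun x => p b < x)) := by
              rw [Finset.disjoint_left]
              rintro x hx1 hx2
              simp only [Finset.mem_filter] at hx1 hx2
              exact absurd (hx2.2.trans hx1.2) (not_lt.mpr (le_of_lt (hp hab)))
            calc (Slo ∪ Shi).card ≤ Slo.card + Shi.card := Finset.card_union_le _ _
              _ ≤ ((T i).filter (fun x => x < p a)).card +
                  ((T i).filter (fun x => p b < x)).card := Nat.add_le_add hc1 hc3
              _ = ((T i).filter (fun x => x < p a) ∪ (T i).filter (fun x => p b < x)).card :=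
                  (Finset.card_union_of_disjoint hdis).symm
              _ ≤ (R ∩ T i).card := Finset.card_le_card (Finset.union_subset hc2 hc4)
          · -- contradiction: T i ⊆ R
            exfalso
            have hba : b ≤ a := not_lt.mp hab
            have hTsub : T i ⊆ R := by
              intro x hx
              rcases lt_trichotomy x (p a) with h | h | h
              · simp only [hSlo, Finset.mem_filter] at haS
                exact haS.2 (Finset.mem_filter.mpr ⟨hx, h⟩)
              · exact absurd hx (h ▸ pnotin a i hi)
              · have : p b < x := lt_of_le_of_lt (hp.monotone hba) h
                simp only [hShi, Finset.mem_filter] at hbS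
                exact hbS.2 (Finset.mem_filter.mpr ⟨hx, this⟩)
            have := Finset.card_le_card hTsub
            rw [cardTi i hi] at this
            omega
        · rw [Finset.not_nonempty_iff_eq_empty] at hhi'
          rw [hhi', Finset.union_empty]
          set a := Slo.max' hlo with ha
          have ⟨hc1, hc2⟩ := hSloBound a (Slo.max'_mem hlo) (fun c hc => Slo.le_max' c hc)
          exact hc1.trans (Finset.card_le_card hc2)
      · rw [Finset.not_nonempty_iff_eq_empty] at hlo
        rw [hlo, Finset.empty_union]
        by_cases hhi' : Shi.Nonempty
        · set b := Shi.min' hhi' with hb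
          have ⟨hc3, hc4⟩ := hShiBound b (Shi.min'_mem hhi') (fun c hc => Shi.min'_le c hc)
          exact hc3.trans (Finset.card_le_card hc4)
        · rw [Finset.not_nonempty_iff_eq_empty] at hhi'
          rw [hhi']
          exact Nat.zero_le _
  -- sum over i
  have hRdecomp : R = Finset.univ.biUnion (fun i => R ∩ T i) := by
    ext x
    simp only [Finset.mem_biUnion, Finset.mem_univ, true_and, Finset.mem_inter]
    constructor
    · intro hx
      have : x ∈ Finset.univ.biUnion T := hcover ▸ hR hx
      simp only [Finset.mem_biUnion, Finset.mem_univ, true_and] at this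
      obtain ⟨i, hi⟩ := this
      exact ⟨i, hx, hi⟩
    · rintro ⟨i, hx, _⟩
      exact hx
  have hRcard' : R.card = ∑ i : Fin m, (R ∩ T i).card := by
    conv_lhs => rw [hRdecomp]
    apply Finset.card_biUnion
    intro i _ j _ hij
    exact Finset.disjoint_of_subset_left Finset.inter_subset_right
      (Finset.disjoint_of_subset_right Finset.inter_subset_right (hdisj i j hij))
  have hBadCard : (Finset.univ.biUnion bad).card ≤ t := by
    calc (Finset.univ.biUnion bad).card ≤ ∑ i : Fin m, (bad i).card :=
        Finset.card_biUnion_le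
      _ ≤ ∑ i : Fin m, (R ∩ T i).card := Finset.sum_le_sum (fun i _ => key i)
      _ = R.card := hRcard'.symm
      _ ≤ t := hRcard
  have hgood : ∃ j : Fin (t+1), ∀ i : Fin m, j ∉ bad i := by
    by_contra hcon
    push_neg at hcon
    have : (Finset.univ : Finset (Fin (t+1))) ⊆ Finset.univ.biUnion bad := by
      intro j _
      obtain ⟨i, hi⟩ := hcon j
      exact Finset.mem_biUnion.mpr ⟨i, Finset.mem_univ i, hi⟩
    have := Finset.card_le_card this
    simp only [Finset.card_univ, Fintype.card_fin] at this
    omega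
  obtain ⟨j, hj⟩ := hgood
  refine ⟨p j, fun i => ?_⟩
  by_cases hi : i = z
  · subst hi
    have hjz := hj z
    simp only [hbad, if_pos rfl, Finset.mem_filter, Finset.mem_univ, true_and] at hjz
    apply subset_convexHull
    simp only [Finset.coe_sdiff, Set.mem_diff, Finset.mem_coe]
    exact ⟨hpmem j, hjz⟩
  · have hji := hj i
    simp only [hbad, if_neg hi, Finset.mem_filter, Finset.mem_univ, true_and, not_or] at hji
    obtain ⟨hnlo, hnhi⟩ := hji
    rw [Finset.not_subset] at hnlo hnhi
    obtain ⟨a, ha, haR⟩ := hnlo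
    obtain ⟨b, hb, hbR⟩ := hnhi
    simp only [Finset.mem_filter] at ha hb
    have haT : a ∈ (↑(T i \ R) : Set ℝ) := by
      simp only [Finset.coe_sdiff, Set.mem_diff, Finset.mem_coe]
      exact ⟨ha.1, haR⟩
    have hbT : b ∈ (↑(T i \ R) : Set ℝ) := by
      simp only [Finset.coe_sdiff, Set.mem_diff, Finset.mem_coe]
      exact ⟨hb.1, hbR⟩
    have hseg : p j ∈ segment ℝ a b := by
      rw [segment_eq_Icc (le_of_lt (ha.2.trans hb.2))]
      exact ⟨le_of_lt ha.2, le_of_lt hb.2⟩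
    exact segment_subset_convexHull haT hbT hseg
end

section
/- Every set of m(t+2) - 1 distinct real numbers admits a t-tolerant Tverberg m-partition. -/
/-- Every set of `m(t+2) - 1` distinct real numbers admits a `t`-tolerant
Tverberg `m`-partition. -/
theorem stmt_4 (m t : ℕ) (P : Finset ℝ) (hP : P.card = m * (t + 2) - 1) :
    ∃ T : Fin m → Finset ℝ,
      (∀ i j : Fin m, i ≠ j → Disjoint (T i) (T j)) ∧
      Finset.univ.biUnion T = P ∧
      (∀ R ⊆ P, R.card ≤ t →
        ∃ x : ℝ, ∀ i : Fin m, x ∈ convexHull ℝ ((T i \ R : Finset ℝ) : Set ℝ)) := by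
  rcases Nat.eq_zero_or_pos m with hm | hm
  · subst hm
    simp only [Nat.zero_mul, Nat.zero_sub] at hP
    have hPe : P = ∅ := Finset.card_eq_zero.mp hP
    exact ⟨fun i => i.elim0, fun i => i.elim0, by simp [hPe],
      fun R _ _ => ⟨0, fun i => i.elim0⟩⟩
  · have hmt : m * (t + 2) = m * (t + 1) + m := by ring
    have hn1 : m * (t + 1) ≤ P.card := by omega
    have hn2 : P.card + 1 = m * (t + 2) := by omega
    set n := P.card with hn
    let e := P.orderIsoOfFin rfl
    let f : Fin n → ℝ := fun k => (e k : ℝ)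
    have hf : StrictMono f := fun a b h => Subtype.coe_lt_coe.mpr (e.lt_iff_lt.mpr h)
    have hfP : ∀ k, f k ∈ P := fun k => (e k).2
    let C : Fin m → Finset (Fin n) :=
      fun i => Finset.univ.filter (fun k => k.val % m = i.val)
    refine ⟨fun i => (C i).image f, ?_, ?_, ?_⟩
    · intro i j hij
      rw [Finset.disjoint_left]
      rintro x hx hy
      simp only [C, Finset.mem_image, Finset.mem_filter, Finset.mem_univ, true_and] at hx hy
      obtain ⟨k, hk, rfl⟩ := hx
      obtain ⟨k', hk', hkk⟩ := hy
      have : k' = k := hf.injective hkk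
      subst this
      exact hij (Fin.ext (hk' ▸ hk)).symm
    · ext x
      simp only [Finset.mem_biUnion, Finset.mem_univ, true_and, Finset.mem_image,
        C, Finset.mem_filter]
      constructor
      · rintro ⟨i, k, _, rfl⟩; exact hfP k
      · intro hx
        refine ⟨⟨(e.symm ⟨x, hx⟩).val % m, Nat.mod_lt _ hm⟩, e.symm ⟨x, hx⟩, rfl, ?_⟩
        simp only [f, OrderIso.apply_symm_apply]
    · intro R hR hRt
      let K : Fin m → Finset (Fin n) := fun i => (C i).filter (fun k => f k ∉ R)
      -- nonemptiness of K i
      have hKne : ∀ i, (K i).Nonempty := by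
        intro i
        rw [Finset.nonempty_iff_ne_empty]
        intro hemp
        have hall : ∀ k ∈ C i, f k ∈ R := by
          intro k hk
          by_contra hkR
          have : k ∈ K i := Finset.mem_filter.mpr ⟨hk, hkR⟩
          simp [hemp] at this
        -- build t+1 distinct elements of R
        have hlt : ∀ q : Fin (t + 1), i.val + q.val * m < n := by
          intro q
          have h1 : q.val * m ≤ t * m := Nat.mul_le_mul_right m (Nat.lt_succ_iff.mp q.2)
          have h2 : m * (t + 1) = m + t * m := by ring
          have h3 : i.val < m := i.2
          omega
        have hcard := Finset.card_le_card_of_injOn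
          (f := fun q : Fin (t + 1) => f ⟨i.val + q.val * m, hlt q⟩)
          (s := Finset.univ) (t := R)
          (by
            intro q _
            apply hall
            simp only [C, Finset.mem_filter, Finset.mem_univ, true_and]
            simpa [Nat.add_mul_mod_self_right] using Nat.mod_eq_of_lt i.2)
          (by
            intro q1 _ q2 _ hq
            have := hf.injective hq
            have hv : i.val + q1.val * m = i.val + q2.val * m := congrArg Fin.val this
            have : q1.val * m = q2.val * m := by omega
            exact Fin.ext (Nat.eq_of_mul_eq_mul_right hm this))
        simp only [Finset.card_univ, Fintype.card_fin] at hcard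
        omega
      let a : Fin m → Fin n := fun i => (K i).min' (hKne i)
      let b : Fin m → Fin n := fun i => (K i).max' (hKne i)
      have haK : ∀ i, a i ∈ K i := fun i => Finset.min'_mem _ _
      have hbK : ∀ i, b i ∈ K i := fun i => Finset.max'_mem _ _
      have hKC : ∀ i, ∀ k ∈ K i, k.val % m = i.val ∧ f k ∉ R := by
        intro i k hk
        simp only [K, C, Finset.mem_filter, Finset.mem_univ, true_and] at hk
        exact hk
      -- the key lemma
      have key : ∀ i j : Fin m, a i ≤ b j := by
        intro i j
        by_contra hab
        push_neg at hab
        have hij : i ≠ j := by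
          rintro rfl
          exact absurd (Finset.min'_le _ _ (hbK i)) (not_le.mpr hab)
        have hijv : i.val ≠ j.val := fun h => hij (Fin.ext h)
        set p := b j with hp
        have hpj : p.val % m = j.val := (hKC j p (hbK j)).1
        obtain ⟨Kq, hpK⟩ : ∃ Kq, p.val = m * Kq + j.val :=
          ⟨p.val / m, by have := Nat.div_add_mod p.val m; omega⟩
        set c1 := Kq + (if i.val < j.val then 1 else 0) with hc1
        have hc1b : Kq ≤ c1 ∧ c1 ≤ Kq + 1 := by rw [hc1]; split_ifs <;> omega
        have hiltm : i.val < m := i.2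
        have hjltm : j.val < m := j.2
        -- the index function
        let φ : Fin (t + 1) → ℕ := fun q =>
          if q.val < c1 then i.val + q.val * m
          else j.val + (Kq + 1 + q.val - c1) * m
        have hφlt : ∀ q, φ q < n := by
          intro q
          simp only [φ]
          split_ifs with hq
          · -- first branch : value < p.val < n
            have hpn : p.val < n := p.2
            rcases lt_or_ge i.val j.val with hil | hil
            · have hqK : q.val ≤ Kq := by simp only [hc1, if_pos hil] at hq; omega
              have h1 : q.val * m ≤ Kq * m := Nat.mul_le_mul_right m hqK
              have h2 : m * Kq = Kq * m := Nat.mul_comm _ _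
              omega
            · have hqK : q.val < Kq := by simp only [hc1, if_neg (not_lt.mpr hil)] at hq; omega
              have h1 : (q.val + 1) * m ≤ Kq * m := Nat.mul_le_mul_right m hqK
              have h2 : m * Kq = Kq * m := Nat.mul_comm _ _
              have h3 : (q.val + 1) * m = q.val * m + m := by ring
              omega
          · -- second branch
            push_neg at hq
            rcases lt_or_ge i.val j.val with hil | hil
            · have hE : Kq + 1 + q.val - c1 ≤ t := by
                simp only [hc1, if_pos hil]
                have := q.2
                omega
              have h1 : (Kq + 1 + q.val - c1) * m ≤ t * m := Nat.mul_le_mul_right m hE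
              have h2 : m * (t + 1) = m + t * m := by ring
              omega
            · have hjm : j.val + 1 < m := by omega
              have hE : Kq + 1 + q.val - c1 ≤ t + 1 := by
                simp only [hc1, if_neg (not_lt.mpr hil)]
                have := q.2
                omega
              have h1 : (Kq + 1 + q.val - c1) * m ≤ (t + 1) * m := Nat.mul_le_mul_right m hE
              have h2 : m * (t + 2) = m + (t + 1) * m := by ring
              omega
        have hφgt : ∀ q : Fin (t+1), ¬ (q.val < c1) → p.val < φ q := by
          intro q hq
          simp only [φ, if_neg hq]
          push_neg at hq
          have hE : Kq + 1 ≤ Kq + 1 + q.val - c1 := by omega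
          have h1 : (Kq + 1) * m ≤ (Kq + 1 + q.val - c1) * m := Nat.mul_le_mul_right m hE
          have h2 : (Kq + 1) * m = Kq * m + m := by ring
          have h3 : m * Kq = Kq * m := Nat.mul_comm _ _
          omega
        have hφp : ∀ q : Fin (t+1), q.val < c1 → φ q < p.val := by
          intro q hq
          simp only [φ, if_pos hq]
          rcases lt_or_ge i.val j.val with hil | hil
          · have hqK : q.val ≤ Kq := by simp only [hc1, if_pos hil] at hq; omega
            have h1 : q.val * m ≤ Kq * m := Nat.mul_le_mul_right m hqK
            have h2 : m * Kq = Kq * m := Nat.mul_comm _ _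
            omega
          · have hqK : q.val < Kq := by simp only [hc1, if_neg (not_lt.mpr hil)] at hq; omega
            have h1 : (q.val + 1) * m ≤ Kq * m := Nat.mul_le_mul_right m hqK
            have h2 : m * Kq = Kq * m := Nat.mul_comm _ _
            have h3 : (q.val + 1) * m = q.val * m + m := by ring
            omega
        have hφmod : ∀ q : Fin (t+1), φ q % m = (if q.val < c1 then i.val else j.val) := by
          intro q
          simp only [φ]
          split_ifs with hq
          · simpa [Nat.add_mul_mod_self_right] using Nat.mod_eq_of_lt i.2
          · simpa [Nat.add_mul_mod_self_right] using Nat.mod_eq_of_lt j.2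
        have hφR : ∀ q : Fin (t+1), f ⟨φ q, hφlt q⟩ ∈ R := by
          intro q
          by_contra hnR
          by_cases hq : q.val < c1
          · have hmem : (⟨φ q, hφlt q⟩ : Fin n) ∈ K i := by
              simp only [K, C, Finset.mem_filter, Finset.mem_univ, true_and]
              exact ⟨by simpa [hq] using hφmod q, hnR⟩
            have h1 : a i ≤ ⟨φ q, hφlt q⟩ := Finset.min'_le _ _ hmem
            have h2 : φ q < p.val := hφp q hq
            have h3 : p < a i := hab
            rw [Fin.le_def] at h1
            rw [Fin.lt_def] at h3
            simp at h1
            omega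
          · have hmem : (⟨φ q, hφlt q⟩ : Fin n) ∈ K j := by
              simp only [K, C, Finset.mem_filter, Finset.mem_univ, true_and]
              exact ⟨by simpa [hq] using hφmod q, hnR⟩
            have h1 : (⟨φ q, hφlt q⟩ : Fin n) ≤ b j := Finset.le_max' _ _ hmem
            have h2 : p.val < φ q := hφgt q hq
            rw [Fin.le_def] at h1
            simp at h1
            omega
        have hφinj : ∀ q1 q2 : Fin (t+1), φ q1 = φ q2 → q1 = q2 := by
          intro q1 q2 hq
          have hmod := hφmod q1
          have hmod2 := hφmod q2
          rw [hq] at hmod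
          by_cases h1 : q1.val < c1 <;> by_cases h2 : q2.val < c1
          · simp only [φ, if_pos h1, if_pos h2] at hq
            have : q1.val * m = q2.val * m := by omega
            exact Fin.ext (Nat.eq_of_mul_eq_mul_right hm this)
          · simp only [if_pos h1, if_neg h2] at hmod hmod2
            exact absurd (hmod.symm.trans hmod2) hijv
          · simp only [if_neg h1, if_pos h2] at hmod hmod2
            exact absurd (hmod2.symm.trans hmod) hijv
          · simp only [φ, if_neg h1, if_neg h2] at hq
            have he : (Kq + 1 + q1.val - c1) * m = (Kq + 1 + q2.val - c1) * m := by omega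
            have := Nat.eq_of_mul_eq_mul_right hm he
            push_neg at h1 h2
            exact Fin.ext (by omega)
        have hcard := Finset.card_le_card_of_injOn
          (f := fun q : Fin (t + 1) => f ⟨φ q, hφlt q⟩)
          (s := Finset.univ) (t := R)
          (fun q _ => hφR q)
          (by
            intro q1 _ q2 _ hq
            have := hf.injective hq
            exact hφinj q1 q2 (congrArg Fin.val this))
        simp only [Finset.card_univ, Fintype.card_fin] at hcard
        omega
      -- conclusion
      have hTK : ∀ i : Fin m, ((C i).image f) \ R = (K i).image f := by
        intro i
        ext x
        simp only [Finset.mem_sdiff, Finset.mem_image, K, Finset.mem_filter]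
        constructor
        · rintro ⟨⟨k, hk, rfl⟩, hxR⟩
          exact ⟨k, ⟨hk, hxR⟩, rfl⟩
        · rintro ⟨k, ⟨hk, hkR⟩, rfl⟩
          exact ⟨⟨k, hk, rfl⟩, hkR⟩
      have : Nonempty (Fin m) := ⟨⟨0, hm⟩⟩
      obtain ⟨i₀, _, hmax⟩ := Finset.exists_max_image (Finset.univ : Finset (Fin m))
        (fun i => f (a i)) Finset.univ_nonempty
      refine ⟨f (a i₀), fun i => ?_⟩
      have hai : f (a i) ∈ (((C i).image f \ R : Finset ℝ) : Set ℝ) := by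
        rw [hTK]
        exact Finset.mem_coe.mpr (Finset.mem_image_of_mem f (haK i))
      have hbi : f (b i) ∈ (((C i).image f \ R : Finset ℝ) : Set ℝ) := by
        rw [hTK]
        exact Finset.mem_coe.mpr (Finset.mem_image_of_mem f (hbK i))
      have hcvx : Convex ℝ (convexHull ℝ (((C i).image f \ R : Finset ℝ) : Set ℝ)) :=
        convex_convexHull ℝ _
      have hoc := hcvx.ordConnected
      exact hoc.out (subset_convexHull ℝ _ hai) (subset_convexHull ℝ _ hbi)
        ⟨hmax i (Finset.mem_univ i), hf.monotone (key i₀ i)⟩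
end

section
/- Let P_1,...,P_k ⊂ ℝ^d be pairwise disjoint finite point sets, and for each i let T_i = {T_{i,1},...,T_{i,m}} be a Tverberg m-partition of P_i with tolerance t_i ≥ 0. Then the partition T of P = ⋃_i P_i whose j-th part is T_j = ⋃_{i=1}^k T_{i,j} is a Tverberg m-partition of P with tolerance t = (∑_{i=1}^k t_i) + k - 1. -/
/-- Merging `k` Tverberg `m`-partitions with tolerances `t i` of pairwise disjoint
finite sets `P i ⊂ ℝ^d` part-by-part yields a Tverberg `m`-partition of `⋃ i, P i`
with tolerance `(∑ i, t i) + k - 1`. -/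
theorem stmt_5 (d k m : ℕ) (hk : 1 ≤ k) (P : Fin k → Finset (Fin d → ℝ))
    (hPdisj : ∀ i j : Fin k, i ≠ j → Disjoint (P i) (P j))
    (t : Fin k → ℕ) (T : Fin k → Fin m → Finset (Fin d → ℝ))
    (hdisj : ∀ i : Fin k, ∀ j j' : Fin m, j ≠ j' → Disjoint (T i j) (T i j'))
    (hcover : ∀ i : Fin k, Finset.univ.biUnion (T i) = P i)
    (htol : ∀ i : Fin k, ∀ R ⊆ P i, R.card ≤ t i →
      ∃ x : Fin d → ℝ, ∀ j : Fin m,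
        x ∈ convexHull ℝ ((T i j \ R : Finset (Fin d → ℝ)) : Set (Fin d → ℝ))) :
    (∀ j j' : Fin m, j ≠ j' →
      Disjoint (Finset.univ.biUnion fun i => T i j) (Finset.univ.biUnion fun i => T i j')) ∧
    Finset.univ.biUnion (fun j => Finset.univ.biUnion fun i => T i j) = Finset.univ.biUnion P ∧
    (∀ R ⊆ Finset.univ.biUnion P, R.card ≤ (∑ i, t i) + k - 1 →
      ∃ x : Fin d → ℝ, ∀ j : Fin m,
        x ∈ convexHull ℝ
          (((Finset.univ.biUnion fun i => T i j) \ R : Finset (Fin d → ℝ)) : Set (Fin d → ℝ))) := by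
  have hsub : ∀ i j, T i j ⊆ P i := fun i j => by
    rw [← hcover i]; exact Finset.subset_biUnion_of_mem _ (Finset.mem_univ j)
  refine ⟨?_, ?_, ?_⟩
  · intro j j' hjj'
    rw [Finset.disjoint_left]
    intro a ha ha'
    simp only [Finset.mem_biUnion, Finset.mem_univ, true_and] at ha ha'
    obtain ⟨i, hi⟩ := ha
    obtain ⟨i', hi'⟩ := ha'
    by_cases h : i = i'
    · subst h
      exact (Finset.disjoint_left.mp (hdisj i j j' hjj') hi) hi'
    · exact (Finset.disjoint_left.mp (hPdisj i i' h) (hsub i j hi)) (hsub i' j' hi')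
  · ext a
    simp only [Finset.mem_biUnion, Finset.mem_univ, true_and, ← hcover]
    exact ⟨fun ⟨j, i, h⟩ => ⟨i, j, h⟩, fun ⟨i, j, h⟩ => ⟨j, i, h⟩⟩
  · intro R hR hRcard
    -- pigeonhole: some i with (R ∩ P i).card ≤ t i
    have hsum : ∑ i, (R ∩ P i).card = R.card := by
      rw [← Finset.card_biUnion]
      · congr 1
        ext a
        simp only [Finset.mem_biUnion, Finset.mem_univ, true_and, Finset.mem_inter]
        constructor
        · rintro ⟨i, h, _⟩; exact h
        · intro h
          obtain ⟨i, _, hi⟩ := Finset.mem_biUnion.mp (hR h)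
          exact ⟨i, h, hi⟩
      · intro i _ i' _ hii'
        exact (hPdisj i i' hii').mono Finset.inter_subset_right Finset.inter_subset_right
    by_contra hcon
    push_neg at hcon
    have hall : ∀ i, ¬ (R ∩ P i).card ≤ t i := by
      intro i hle
      obtain ⟨x, hx⟩ := htol i (R ∩ P i) Finset.inter_subset_right hle
      obtain ⟨j, hj⟩ := hcon x
      apply hj
      have heq : T i j \ (R ∩ P i) = T i j \ R := by
        ext a
        simp only [Finset.mem_sdiff, Finset.mem_inter]
        constructor
        · rintro ⟨ha, hn⟩
          exact ⟨ha, fun hr => hn ⟨hr, hsub i j ha⟩⟩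
        · rintro ⟨ha, hn⟩
          exact ⟨ha, fun ⟨hr, _⟩ => hn hr⟩
      have hss : (T i j \ R : Finset (Fin d → ℝ)) ⊆
          (Finset.univ.biUnion fun i' => T i' j) \ R := by
        intro a ha
        rw [Finset.mem_sdiff] at ha ⊢
        exact ⟨Finset.mem_biUnion.mpr ⟨i, Finset.mem_univ i, ha.1⟩, ha.2⟩
      refine convexHull_mono ?_ (heq ▸ hx j)
      exact_mod_cast hss
    have : ∑ i, (t i + 1) ≤ ∑ i, (R ∩ P i).card :=
      Finset.sum_le_sum fun i _ => Nat.succ_le_of_lt (Nat.lt_of_not_le (hall i))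
    rw [hsum, Finset.sum_add_distrib, Finset.sum_const, Finset.card_univ,
      Fintype.card_fin, smul_eq_mul, mul_one] at this
    omega
end

section
/- Let P ⊂ ℝ^d be a finite set, and embed ℝ^d into ℝ^{d+1} as the hyperplane h: x_{d+1} = 0. Let c ∈ ℝ^d, set t = ⌈|P|/(d+1)⌉ - 1, and let T = T^- ∪ T^+ where T^- consists of t+1 points on the line through c orthogonal to h with negative last coordinate and T^+ consists of t+1 such points with positive last coordinate. Then {P, T} is a t-tolerant Tverberg 2-partition of P ∪ T if and only if c is a centerpoint of P (i.e., c has Tukey depth at least ⌈|P|/(d+1)⌉ with respect to P). -/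
private lemma snoc_linear (d : ℕ) :
    IsLinearMap ℝ (fun p : Fin d → ℝ => (Fin.snoc p 0 : Fin (d + 1) → ℝ)) := by
  constructor
  · intro x y
    funext j
    refine Fin.lastCases ?_ (fun i => ?_) j <;> simp
  · intro a x
    funext j
    refine Fin.lastCases ?_ (fun i => ?_) j <;> simp

private lemma g_linear (d : ℕ) (v : Fin d → ℝ) :
    IsLinearMap ℝ (fun x : Fin (d + 1) → ℝ => ∑ i, v i * x i.castSucc) := by
  constructor
  · intro x y
    simp [mul_add, Finset.sum_add_distrib]
  · intro a x
    simp [Finset.mul_sum, mul_left_comm]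

/-- Embed `P ⊂ ℝ^d` into `ℝ^{d+1}` as the hyperplane `x_{d+1} = 0` (via `Fin.snoc · 0`),
let `t + 1 = ⌈|P|/(d+1)⌉`, and let `T = Tm ∪ Tp` consist of `t+1` points on the line
through `c` orthogonal to the hyperplane with negative last coordinate and `t+1` such
points with positive last coordinate. Then `{P, T}` is a `t`-tolerant Tverberg
`2`-partition of `P ∪ T` if and only if `c` is a centerpoint of `P`. -/
theorem stmt_7 (d t : ℕ) (P : Finset (Fin d → ℝ)) (c : Fin d → ℝ)
    (ht : t + 1 = (P.card + d) / (d + 1))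
    (Tm Tp : Finset (Fin (d + 1) → ℝ))
    (hTmcard : Tm.card = t + 1) (hTpcard : Tp.card = t + 1)
    (hTm : ∀ q ∈ Tm, ∃ a : ℝ, a < 0 ∧ q = Fin.snoc c a)
    (hTp : ∀ q ∈ Tp, ∃ a : ℝ, 0 < a ∧ q = Fin.snoc c a) :
    (Disjoint (P.image fun p => (Fin.snoc p 0 : Fin (d + 1) → ℝ)) (Tm ∪ Tp) ∧
      ∀ R ⊆ (P.image fun p => (Fin.snoc p 0 : Fin (d + 1) → ℝ)) ∪ (Tm ∪ Tp), R.card ≤ t →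
        (convexHull ℝ
            (((P.image fun p => (Fin.snoc p 0 : Fin (d + 1) → ℝ)) \ R :
              Finset (Fin (d + 1) → ℝ)) : Set (Fin (d + 1) → ℝ)) ∩
          convexHull ℝ
            (((Tm ∪ Tp) \ R : Finset (Fin (d + 1) → ℝ)) : Set (Fin (d + 1) → ℝ))).Nonempty) ↔
    (∀ (v : Fin d → ℝ) (b : ℝ), b ≤ ∑ j, v j * c j →
      t + 1 ≤ (P.filter fun p => b ≤ ∑ j, v j * p j).card) := by
  set emb : (Fin d → ℝ) → (Fin (d + 1) → ℝ) := fun p => Fin.snoc p 0 with hembdef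
  have hembinj : Function.Injective emb := by
    intro x y h
    funext i
    have := congrFun h i.castSucc
    simpa [emb] using this
  have hdisj : Disjoint (P.image emb) (Tm ∪ Tp) := by
    rw [Finset.disjoint_left]
    rintro x hx hx'
    obtain ⟨p, _, rfl⟩ := Finset.mem_image.1 hx
    rcases Finset.mem_union.1 hx' with h | h
    · obtain ⟨a, ha, hq⟩ := hTm _ h
      have := congrFun hq (Fin.last d)
      simp [emb] at this
      exact absurd this.symm (ne_of_lt ha)
    · obtain ⟨a, ha, hq⟩ := hTp _ h
      have := congrFun hq (Fin.last d)
      simp [emb] at this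
      exact absurd this.symm (ne_of_gt ha)
  constructor
  · rintro ⟨-, hTv⟩ v b hb
    by_contra hlt
    push_neg at hlt
    set F := P.filter (fun p => b ≤ ∑ j, v j * p j) with hF
    set R := F.image emb with hR
    have hRsub : R ⊆ (P.image emb) ∪ (Tm ∪ Tp) :=
      (Finset.image_subset_image (Finset.filter_subset _ _)).trans Finset.subset_union_left
    have hRcard : R.card ≤ t :=
      le_trans Finset.card_image_le (Nat.lt_succ_iff.1 hlt)
    obtain ⟨x, hx1, hx2⟩ := hTv R hRsub hRcard
    have hTR : (Tm ∪ Tp) \ R = Tm ∪ Tp :=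
      Finset.sdiff_eq_self_of_disjoint
        (hdisj.symm.mono_right (Finset.image_subset_image (Finset.filter_subset _ _)))
    -- the linear functional
    set g : (Fin (d + 1) → ℝ) → ℝ := fun x => ∑ i, v i * x i.castSucc with hg
    have hx2' : b ≤ g x := by
      have hsub : ((Tm ∪ Tp : Finset (Fin (d + 1) → ℝ)) : Set (Fin (d + 1) → ℝ)) ⊆
          {w | b ≤ g w} := by
        intro q hq
        rcases Finset.mem_union.1 (Finset.mem_coe.1 hq) with h | h
        · obtain ⟨a, _, rfl⟩ := hTm _ h
          simpa [g] using hb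
        · obtain ⟨a, _, rfl⟩ := hTp _ h
          simpa [g] using hb
      have := convexHull_min hsub (convex_halfSpace_ge (g_linear d v) b)
      rw [hTR] at hx2
      exact this hx2
    have hx1' : g x < b := by
      have hsub : (((P.image emb) \ R : Finset (Fin (d + 1) → ℝ)) : Set (Fin (d + 1) → ℝ)) ⊆
          {w | g w < b} := by
        intro q hq
        rw [Finset.mem_coe, Finset.mem_sdiff] at hq
        obtain ⟨p, hp, rfl⟩ := Finset.mem_image.1 hq.1
        have hpF : p ∉ F := fun hpF => hq.2 (Finset.mem_image_of_mem emb hpF)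
        have : ¬ b ≤ ∑ j, v j * p j := fun hle => hpF (Finset.mem_filter.2 ⟨hp, hle⟩)
        simpa [g, emb] using lt_of_not_ge this
      exact convexHull_min hsub (convex_halfSpace_lt (g_linear d v) b) hx1
    linarith
  · intro hcp
    refine ⟨hdisj, ?_⟩
    intro R hRsub hRcard
    set R' : Finset (Fin d → ℝ) := P.filter (fun p => emb p ∈ R) with hR'
    have hR'card : R'.card ≤ t := by
      refine le_trans (Finset.card_le_card_of_injOn emb
        (fun p hp => (Finset.mem_filter.1 hp).2) hembinj.injOn) hRcard
    -- c is in the convex hull of P \ R'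
    have hc : c ∈ convexHull ℝ ((P \ R' : Finset (Fin d → ℝ)) : Set (Fin d → ℝ)) := by
      by_contra hcn
      obtain ⟨f, u, hfc, hfy⟩ := geometric_hahn_banach_point_closed
        (convex_convexHull ℝ _) ((Finset.finite_toSet _).isClosed_convexHull (𝕜 := ℝ)) hcn
      have hfx : ∀ x : Fin d → ℝ, f x = ∑ j, x j * f (Pi.single j 1) := by
        intro x
        have h1 : (∑ j, x j • (Pi.single j 1 : Fin d → ℝ)) = x := by
          funext i
          simp [Finset.sum_apply, Pi.single_apply, mul_ite, Finset.sum_ite_eq']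
        conv_lhs => rw [← h1]
        rw [map_sum]
        simp [smul_eq_mul]
      have hneg : ∀ x : Fin d → ℝ,
          (∑ j, (-(f (Pi.single j 1))) * x j) = -(f x) := by
        intro x
        rw [hfx x, ← Finset.sum_neg_distrib]
        exact Finset.sum_congr rfl (fun j _ => by ring)
      have hkey := hcp (fun j => -(f (Pi.single j 1))) (-u)
        (by rw [hneg c]; linarith)
      have hsubR' : (P.filter fun p => -u ≤ ∑ j, (-(f (Pi.single j 1))) * p j) ⊆ R' := by
        intro p hp
        rw [Finset.mem_filter] at hp
        obtain ⟨hpP, hple⟩ := hp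
        rw [hneg p] at hple
        have hfp : f p ≤ u := by linarith
        by_contra hpR'
        have hmem : p ∈ P \ R' := Finset.mem_sdiff.2 ⟨hpP, hpR'⟩
        have : u < f p := hfy p (subset_convexHull ℝ _ (Finset.mem_coe.2 hmem))
        linarith
      have h1 : t + 1 ≤ R'.card := le_trans hkey (Finset.card_le_card hsubR')
      exact Nat.not_succ_le_self t (h1.trans hR'card)
    -- the embedded point emb c is in the convex hull of (P.image emb) \ R
    have himg : (P.image emb) \ R = (P \ R').image emb := by
      ext x
      simp only [Finset.mem_sdiff, Finset.mem_image, hR', Finset.mem_filter]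
      constructor
      · rintro ⟨⟨p, hp, rfl⟩, hx⟩
        exact ⟨p, ⟨hp, fun h => hx h.2⟩, rfl⟩
      · rintro ⟨p, ⟨hp, hp'⟩, rfl⟩
        exact ⟨⟨p, hp, rfl⟩, fun h => hp' ⟨hp, h⟩⟩
    have hc1 : emb c ∈ convexHull ℝ
        (((P.image emb) \ R : Finset (Fin (d + 1) → ℝ)) : Set (Fin (d + 1) → ℝ)) := by
      rw [himg, Finset.coe_image, ← (snoc_linear d).image_convexHull]
      exact Set.mem_image_of_mem emb hc
    -- emb c is in the convex hull of (Tm ∪ Tp) \ R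
    have hmne : (Tm \ R).Nonempty := by
      rw [Finset.nonempty_iff_ne_empty]
      intro h
      have := Finset.card_le_card (Finset.sdiff_eq_empty_iff_subset.1 h)
      omega
    have hpne : (Tp \ R).Nonempty := by
      rw [Finset.nonempty_iff_ne_empty]
      intro h
      have := Finset.card_le_card (Finset.sdiff_eq_empty_iff_subset.1 h)
      omega
    obtain ⟨qm, hqm⟩ := hmne
    obtain ⟨qp, hqp⟩ := hpne
    obtain ⟨a, ha, rfl⟩ := hTm qm (Finset.mem_sdiff.1 hqm).1
    obtain ⟨a', ha', rfl⟩ := hTp qp (Finset.mem_sdiff.1 hqp).1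
    have hqm' : (Fin.snoc c a : Fin (d + 1) → ℝ) ∈ (Tm ∪ Tp) \ R :=
      Finset.mem_sdiff.2 ⟨Finset.mem_union_left _ (Finset.mem_sdiff.1 hqm).1,
        (Finset.mem_sdiff.1 hqm).2⟩
    have hqp' : (Fin.snoc c a' : Fin (d + 1) → ℝ) ∈ (Tm ∪ Tp) \ R :=
      Finset.mem_sdiff.2 ⟨Finset.mem_union_right _ (Finset.mem_sdiff.1 hqp).1,
        (Finset.mem_sdiff.1 hqp).2⟩
    have haa : (0 : ℝ) < a' - a := by linarith
    have hseg : emb c ∈ segment ℝ (Fin.snoc c a : Fin (d + 1) → ℝ)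
        (Fin.snoc c a' : Fin (d + 1) → ℝ) := by
      refine ⟨a' / (a' - a), -a / (a' - a), div_nonneg ha'.le haa.le,
        div_nonneg (by linarith) haa.le, ?_, ?_⟩
      · field_simp
        ring
      · funext j
        refine Fin.lastCases ?_ (fun i => ?_) j
        · simp only [Pi.add_apply, Pi.smul_apply, smul_eq_mul, Fin.snoc_last]
          show a' / (a' - a) * a + -a / (a' - a) * a' = (Fin.snoc c 0 : Fin (d+1) → ℝ) (Fin.last d)
          rw [Fin.snoc_last]
          field_simp
          ring
        · simp only [Pi.add_apply, Pi.smul_apply, smul_eq_mul, Fin.snoc_castSucc]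
          show a' / (a' - a) * c i + -a / (a' - a) * c i = (Fin.snoc c 0 : Fin (d+1) → ℝ) i.castSucc
          rw [Fin.snoc_castSucc]
          field_simp
          ring
    have hc2 : emb c ∈ convexHull ℝ
        (((Tm ∪ Tp) \ R : Finset (Fin (d + 1) → ℝ)) : Set (Fin (d + 1) → ℝ)) :=
      segment_subset_convexHull (Finset.mem_coe.2 hqm') (Finset.mem_coe.2 hqp') hseg
    exact ⟨emb c, hc1, hc2⟩
end

section
/- Let P ⊂ ℝ^d be a finite set of points with pairwise distinct last coordinates, let h be a hyperplane orthogonal to the x_d-axis with half of the points of P strictly on each side, and pair up the points (p_i^-, p_i^+) with p_i^- below h and p_i^+ above h. Let q_i be the intersection of the segment p_i^- p_i^+ with h, regarded as a point in ℝ^{d-1}. If {T'_1,...,T'_m} is a t-tolerant Tverberg m-partition of Q = {q_1,...,q_{|P|/2}}, then the partition {T_1,...,T_m} of P defined by T_j = {p_i^-, p_i^+ : q_i ∈ T'_j} is a t-tolerant Tverberg m-partition of P. -/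
/-- Dimension reduction: pair up the points of `P ⊂ ℝ^{d+1}` (all with pairwise
distinct last coordinates) across a hyperplane `x_{d+1} = α`, let `q i ∈ ℝ^d` be the
intersection of the segment of the `i`-th pair with the hyperplane. Lifting a
`t`-tolerant Tverberg `m`-partition of `Q = {q i}` (replacing each `q i` by its pair)
yields a `t`-tolerant Tverberg `m`-partition of `P`. -/
theorem stmt_8 (d m t N : ℕ) (α : ℝ)
    (pm pp : Fin N → (Fin (d + 1) → ℝ)) (q : Fin N → (Fin d → ℝ))
    (hbelow : ∀ i, pm i (Fin.last d) < α) (habove : ∀ i, α < pp i (Fin.last d))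
    (hdist : Function.Injective
      fun s : Fin N × Bool => (if s.2 then pp s.1 else pm s.1) (Fin.last d))
    (hq : ∀ i, (Fin.snoc (q i) α : Fin (d + 1) → ℝ) ∈ segment ℝ (pm i) (pp i))
    (T' : Fin m → Finset (Fin d → ℝ))
    (hdisj' : ∀ j j' : Fin m, j ≠ j' → Disjoint (T' j) (T' j'))
    (hcover' : Finset.univ.biUnion T' = Finset.image q Finset.univ)
    (htol' : ∀ R ⊆ Finset.image q Finset.univ, R.card ≤ t →
      ∃ x : Fin d → ℝ, ∀ j : Fin m,
        x ∈ convexHull ℝ ((T' j \ R : Finset (Fin d → ℝ)) : Set (Fin d → ℝ))) :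
    (∀ j j' : Fin m, j ≠ j' →
      Disjoint
        ((Finset.univ.filter fun i => q i ∈ T' j).image pm ∪
          (Finset.univ.filter fun i => q i ∈ T' j).image pp)
        ((Finset.univ.filter fun i => q i ∈ T' j').image pm ∪
          (Finset.univ.filter fun i => q i ∈ T' j').image pp)) ∧
    Finset.univ.biUnion
        (fun j => (Finset.univ.filter fun i => q i ∈ T' j).image pm ∪
          (Finset.univ.filter fun i => q i ∈ T' j).image pp) =
      Finset.image pm Finset.univ ∪ Finset.image pp Finset.univ ∧
    (∀ R ⊆ Finset.image pm Finset.univ ∪ Finset.image pp Finset.univ, R.card ≤ t →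
      ∃ x : Fin (d + 1) → ℝ, ∀ j : Fin m,
        x ∈ convexHull ℝ
          ((((Finset.univ.filter fun i => q i ∈ T' j).image pm ∪
              (Finset.univ.filter fun i => q i ∈ T' j).image pp) \ R :
            Finset (Fin (d + 1) → ℝ)) : Set (Fin (d + 1) → ℝ))) := by

  -- consequences of injectivity of last coordinates
  have hmm : ∀ i i' : Fin N, pm i = pm i' → i = i' := by
    intro i i' h
    have h2 : ((i, false) : Fin N × Bool) = (i', false) := by
      apply hdist
      simp [h]
    exact (Prod.ext_iff.mp h2).1
  have hpp' : ∀ i i' : Fin N, pp i = pp i' → i = i' := by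
    intro i i' h
    have h2 : ((i, true) : Fin N × Bool) = (i', true) := by
      apply hdist
      simp [h]
    exact (Prod.ext_iff.mp h2).1
  have hmp : ∀ i i' : Fin N, pm i ≠ pp i' := by
    intro i i' h
    have h2 : ((i, false) : Fin N × Bool) = (i', true) := by
      apply hdist
      simp [h]
    simpa using (Prod.ext_iff.mp h2).2
  refine ⟨?_, ?_, ?_⟩
  · -- disjointness
    intro j j' hjj'
    rw [Finset.disjoint_left]
    intro x hx hx'
    simp only [Finset.mem_union, Finset.mem_image, Finset.mem_filter,
      Finset.mem_univ, true_and] at hx hx'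
    have key : ∃ i : Fin N, q i ∈ T' j ∧ q i ∈ T' j' := by
      rcases hx with ⟨i, hi, hix⟩ | ⟨i, hi, hix⟩ <;>
        rcases hx' with ⟨i', hi', hix'⟩ | ⟨i', hi', hix'⟩
      · exact ⟨i, hi, by rwa [hmm i i' (hix.trans hix'.symm)]⟩
      · exact absurd (hix.trans hix'.symm) (hmp i i')
      · exact absurd (hix'.trans hix.symm) (hmp i' i)
      · exact ⟨i, hi, by rwa [hpp' i i' (hix.trans hix'.symm)]⟩
    obtain ⟨i, h1, h2⟩ := key
    exact (Finset.disjoint_left.mp (hdisj' j j' hjj')) h1 h2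
  · -- cover
    ext x
    constructor
    · intro hx
      obtain ⟨j, _, hx⟩ := Finset.mem_biUnion.mp hx
      rcases Finset.mem_union.mp hx with hx | hx
      · obtain ⟨i, _, hix⟩ := Finset.mem_image.mp hx
        exact Finset.mem_union_left _
          (Finset.mem_image.mpr ⟨i, Finset.mem_univ i, hix⟩)
      · obtain ⟨i, _, hix⟩ := Finset.mem_image.mp hx
        exact Finset.mem_union_right _
          (Finset.mem_image.mpr ⟨i, Finset.mem_univ i, hix⟩)
    · have hmem : ∀ i : Fin N, ∃ j : Fin m, q i ∈ T' j := by
        intro i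
        have h1 : q i ∈ Finset.univ.biUnion T' := by
          rw [hcover']
          exact Finset.mem_image_of_mem _ (Finset.mem_univ i)
        obtain ⟨j, _, hj⟩ := Finset.mem_biUnion.mp h1
        exact ⟨j, hj⟩
      intro hx
      rcases Finset.mem_union.mp hx with hx | hx
      · obtain ⟨i, _, hix⟩ := Finset.mem_image.mp hx
        obtain ⟨j, hj⟩ := hmem i
        refine Finset.mem_biUnion.mpr ⟨j, Finset.mem_univ j, Finset.mem_union_left _ ?_⟩
        exact Finset.mem_image.mpr ⟨i, Finset.mem_filter.mpr ⟨Finset.mem_univ i, hj⟩, hix⟩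
      · obtain ⟨i, _, hix⟩ := Finset.mem_image.mp hx
        obtain ⟨j, hj⟩ := hmem i
        refine Finset.mem_biUnion.mpr ⟨j, Finset.mem_univ j, Finset.mem_union_right _ ?_⟩
        exact Finset.mem_image.mpr ⟨i, Finset.mem_filter.mpr ⟨Finset.mem_univ i, hj⟩, hix⟩
  · -- tolerance
    intro R hR hRcard
    set S : Finset (Fin N) := Finset.univ.filter (fun i => pm i ∈ R ∨ pp i ∈ R) with hS
    set R' : Finset (Fin d → ℝ) := S.image q with hR'
    have hR'sub : R' ⊆ Finset.image q Finset.univ :=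
      Finset.image_subset_image (Finset.subset_univ S)
    have hScard : S.card ≤ R.card := by
      apply Finset.card_le_card_of_injOn (fun i => if pm i ∈ R then pm i else pp i)
      · intro i hi
        simp only [hS, Finset.mem_coe, Finset.mem_filter, Finset.mem_univ, true_and] at hi
        by_cases h : pm i ∈ R
        · simpa [h] using h
        · simp only [h, if_false, Finset.mem_coe]
          tauto
      · intro i hi i' hi' hii'
        simp only at hii'
        by_cases h : pm i ∈ R <;> by_cases h' : pm i' ∈ R <;>
          simp only [h, h', if_true, if_false] at hii'
        · exact hmm i i' hii'
        · exact absurd hii' (hmp i i')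
        · exact absurd hii'.symm (hmp i' i)
        · exact hpp' i i' hii'
    have hR'card : R'.card ≤ t :=
      le_trans (le_trans Finset.card_image_le hScard) hRcard
    obtain ⟨x, hx⟩ := htol' R' hR'sub hR'card
    refine ⟨Fin.snoc x α, fun j => ?_⟩
    set Tj : Finset (Fin (d + 1) → ℝ) :=
      (Finset.univ.filter fun i => q i ∈ T' j).image pm ∪
        (Finset.univ.filter fun i => q i ∈ T' j).image pp with hTj
    show (Fin.snoc x α : Fin (d + 1) → ℝ) ∈ convexHull ℝ ((Tj \ R : Finset _) : Set _)
    have hsnoc : ∀ (a b : ℝ) (v w : Fin d → ℝ), a + b = 1 →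
        (Fin.snoc (a • v + b • w) α : Fin (d + 1) → ℝ)
          = a • (Fin.snoc v α : Fin (d + 1) → ℝ) + b • (Fin.snoc w α : Fin (d + 1) → ℝ) := by
      intro a b v w hab
      funext k
      refine Fin.lastCases ?_ ?_ k
      · simp only [Fin.snoc_last, Pi.add_apply, Pi.smul_apply, smul_eq_mul]
        linear_combination α * hab.symm
      · intro k
        simp [Fin.snoc_castSucc]
    set C : Set (Fin d → ℝ) :=
      {v | (Fin.snoc v α : Fin (d + 1) → ℝ) ∈ convexHull ℝ ((Tj \ R : Finset _) : Set _)}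
      with hC
    have hCconv : Convex ℝ C := by
      intro v hv w hw a b ha hb hab
      simp only [hC, Set.mem_setOf_eq]
      rw [hsnoc a b v w hab]
      exact (convex_convexHull ℝ _) hv hw ha hb hab
    have hsub : ((T' j \ R' : Finset (Fin d → ℝ)) : Set (Fin d → ℝ)) ⊆ C := by
      intro p hp
      simp only [Finset.coe_sdiff, Set.mem_diff, Finset.mem_coe] at hp
      obtain ⟨hpT, hpR⟩ := hp
      have hpq : ∃ i : Fin N, q i = p := by
        have : p ∈ Finset.univ.biUnion T' := Finset.mem_biUnion.mpr ⟨j, Finset.mem_univ j, hpT⟩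
        rw [hcover'] at this
        simpa using this
      obtain ⟨i, hip⟩ := hpq
      have hiR : pm i ∉ R ∧ pp i ∉ R := by
        by_contra hcon
        have hiS : i ∈ S := by
          simp only [hS, Finset.mem_filter, Finset.mem_univ, true_and]
          tauto
        exact hpR (by rw [← hip]; exact Finset.mem_image_of_mem q hiS)
      have hmem1 : pm i ∈ Tj \ R := by
        rw [Finset.mem_sdiff]
        refine ⟨Finset.mem_union_left _ ?_, hiR.1⟩
        exact Finset.mem_image_of_mem pm (Finset.mem_filter.mpr ⟨Finset.mem_univ i, hip ▸ hpT⟩)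
      have hmem2 : pp i ∈ Tj \ R := by
        rw [Finset.mem_sdiff]
        refine ⟨Finset.mem_union_right _ ?_, hiR.2⟩
        exact Finset.mem_image_of_mem pp (Finset.mem_filter.mpr ⟨Finset.mem_univ i, hip ▸ hpT⟩)
      simp only [hC, Set.mem_setOf_eq]
      rw [← hip]
      exact (convex_convexHull ℝ _).segment_subset
        (subset_convexHull ℝ _ (Finset.mem_coe.mpr hmem1))
        (subset_convexHull ℝ _ (Finset.mem_coe.mpr hmem2)) (hq i)
    exact convexHull_min hsub hCconv (hx j)
end

section
/- Let T_1, T_2 ⊂ ℝ be disjoint finite sets with |T_1| = |T_2| = t+1. Then there exists a set R ⊆ T_1 ∪ T_2 with |R| = t such that conv(T_1 \ R) ∩ conv(T_2 \ R) = ∅. In particular, {T_1, T_2} is not a t-tolerant Tverberg 2-partition of T_1 ∪ T_2. -/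
lemma sep_aux (t : ℕ) (T1 T2 : Finset ℝ) (hdisj : Disjoint T1 T2)
    (h1 : T1.card = t + 1) (hne1 : T1.Nonempty) (hne2 : T2.Nonempty)
    (hlt : T1.min' hne1 < T2.min' hne2) :
    ∃ R ⊆ T1 ∪ T2, R.card = t ∧
      convexHull ℝ ((T1 \ R : Finset ℝ) : Set ℝ) ∩
        convexHull ℝ ((T2 \ R : Finset ℝ) : Set ℝ) = ∅ := by
  set a := T1.min' hne1 with ha
  have haT1 : a ∈ T1 := T1.min'_mem hne1
  refine ⟨T1.erase a, ?_, ?_, ?_⟩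
  · exact (Finset.erase_subset _ _).trans Finset.subset_union_left
  · rw [Finset.card_erase_of_mem haT1, h1]; rfl
  · have hT1 : T1 \ T1.erase a = {a} := by
      ext x
      simp only [Finset.mem_sdiff, Finset.mem_erase, Finset.mem_singleton]
      constructor
      · rintro ⟨hx, h⟩
        by_contra hne
        exact h ⟨hne, hx⟩
      · rintro rfl; exact ⟨haT1, fun h => h.1 rfl⟩
    have hT2 : T2 \ T1.erase a = T2 :=
      Finset.sdiff_eq_self_of_disjoint
        (hdisj.symm.mono_right (Finset.erase_subset _ _))
    rw [hT1, hT2]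
    have hsub : (T2 : Set ℝ) ⊆ Set.Ici (T2.min' hne2) :=
      fun x hx => T2.min'_le x hx
    have hconv : convexHull ℝ (T2 : Set ℝ) ⊆ Set.Ici (T2.min' hne2) :=
      convexHull_min hsub (convex_Ici _)
    ext x
    simp only [Finset.coe_singleton, convexHull_singleton, Set.mem_inter_iff,
      Set.mem_singleton_iff, Set.mem_empty_iff_false, iff_false, not_and]
    rintro rfl hx
    exact absurd (hconv hx) (not_le.mpr hlt)

/-- For disjoint `T₁, T₂ ⊂ ℝ` of size `t+1` each, some `R ⊆ T₁ ∪ T₂` of size `t`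
separates the convex hulls; in particular `{T₁, T₂}` is not a `t`-tolerant
Tverberg `2`-partition of `T₁ ∪ T₂`. -/
theorem stmt_9 (t : ℕ) (T1 T2 : Finset ℝ) (hdisj : Disjoint T1 T2)
    (h1 : T1.card = t + 1) (h2 : T2.card = t + 1) :
    (∃ R ⊆ T1 ∪ T2, R.card = t ∧
      convexHull ℝ ((T1 \ R : Finset ℝ) : Set ℝ) ∩
        convexHull ℝ ((T2 \ R : Finset ℝ) : Set ℝ) = ∅) ∧
    ¬ (∀ R ⊆ T1 ∪ T2, R.card ≤ t →
      (convexHull ℝ ((T1 \ R : Finset ℝ) : Set ℝ) ∩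
        convexHull ℝ ((T2 \ R : Finset ℝ) : Set ℝ)).Nonempty) := by
  have hne1 : T1.Nonempty := Finset.card_pos.mp (by omega)
  have hne2 : T2.Nonempty := Finset.card_pos.mp (by omega)
  have hne : T1.min' hne1 ≠ T2.min' hne2 := by
    intro h
    exact Finset.disjoint_left.mp hdisj (T1.min'_mem hne1)
      (h ▸ T2.min'_mem hne2)
  have key : ∃ R ⊆ T1 ∪ T2, R.card = t ∧
      convexHull ℝ ((T1 \ R : Finset ℝ) : Set ℝ) ∩
        convexHull ℝ ((T2 \ R : Finset ℝ) : Set ℝ) = ∅ := by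
    rcases lt_or_gt_of_ne hne with h | h
    · exact sep_aux t T1 T2 hdisj h1 hne1 hne2 h
    · obtain ⟨R, hR, hcard, hsep⟩ := sep_aux t T2 T1 hdisj.symm h2 hne2 hne1 h
      exact ⟨R, by rwa [Finset.union_comm], hcard, by rwa [Set.inter_comm]⟩
  refine ⟨key, fun hall => ?_⟩
  obtain ⟨R, hR, hcard, hsep⟩ := key
  obtain ⟨x, hx⟩ := hall R hR (le_of_eq hcard)
  rw [hsep] at hx
  exact hx
end

section
/- Assuming Tverberg's theorem (every set of (d+1)(m-1)+1 points in ℝ^d has a Tverberg m-partition), every finite set P ⊂ ℝ^d admits a t-tolerant Tverberg m-partition with m = ⌈⌊|P|/(t+1)⌋/(d+1)⌉, provided |P| ≥ t+1. -/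
/-- Extract `k` pairwise disjoint subsets of size `c` from a finset of size `≥ k*c`. -/
lemma extract_disjoint {α : Type*} [DecidableEq α] :
    ∀ (k : ℕ) (c : ℕ) (P : Finset α), k * c ≤ P.card →
    ∃ S : Fin k → Finset α, (∀ j, S j ⊆ P) ∧ (∀ j, (S j).card = c) ∧
      (∀ j j', j ≠ j' → Disjoint (S j) (S j')) := by
  intro k
  induction k with
  | zero =>
    intro c P _
    exact ⟨fun j => j.elim0, fun j => j.elim0, fun j => j.elim0, fun j => j.elim0⟩
  | succ k ih =>
    intro c P h
    have h' : k * c + c ≤ P.card := by rw [Nat.succ_mul] at h; exact h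
    obtain ⟨S0, hS0P, hS0c⟩ := Finset.exists_subset_card_eq (s := P) (n := c) (by omega)
    have h2 : k * c ≤ (P \ S0).card := by
      rw [Finset.card_sdiff_of_subset hS0P, hS0c]; omega
    obtain ⟨S, hSP, hSc, hSd⟩ := ih c (P \ S0) h2
    have hSsub : ∀ i, S i ⊆ P \ S0 := hSP
    refine ⟨Fin.cons S0 S, ?_, ?_, ?_⟩
    · intro j
      refine Fin.cases ?_ ?_ j
      · simpa using hS0P
      · intro i
        simpa using (hSsub i).trans Finset.sdiff_subset
    · intro j
      refine Fin.cases ?_ ?_ j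
      · simpa using hS0c
      · intro i; simpa using hSc i
    · have hd0 : ∀ i, Disjoint S0 (S i) := fun i =>
        (Finset.disjoint_sdiff).mono_right (hSsub i)
      intro j j'
      refine Fin.cases ?_ ?_ j <;> [skip; intro i] <;> refine Fin.cases ?_ ?_ j'
      · intro h; simp at h
      · intro i' _; simpa using hd0 i'
      · intro _; simpa using (hd0 i).symm
      · intro i' h
        have hne : i ≠ i' := by
          rintro rfl; simp at h
        simpa using hSd i i' hne

/-- Assuming Tverberg's theorem in `ℝ^d`, every finite `P ⊂ ℝ^d` with `|P| ≥ t+1`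
admits a `t`-tolerant Tverberg `m`-partition with `m = ⌈⌊|P|/(t+1)⌋/(d+1)⌉`. -/
theorem stmt_11 (d t : ℕ)
    (hTv : ∀ m' : ℕ, 1 ≤ m' → ∀ S : Finset (Fin d → ℝ),
      S.card = (d + 1) * (m' - 1) + 1 →
      ∃ T : Fin m' → Finset (Fin d → ℝ),
        (∀ i j : Fin m', i ≠ j → Disjoint (T i) (T j)) ∧
        Finset.univ.biUnion T = S ∧
        ∃ x : Fin d → ℝ, ∀ i : Fin m',
          x ∈ convexHull ℝ ((T i : Finset (Fin d → ℝ)) : Set (Fin d → ℝ)))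
    (P : Finset (Fin d → ℝ)) (hP : t + 1 ≤ P.card) :
    ∃ T : Fin ((P.card / (t + 1) + d) / (d + 1)) → Finset (Fin d → ℝ),
      (∀ i j, i ≠ j → Disjoint (T i) (T j)) ∧
      Finset.univ.biUnion T = P ∧
      (∀ R ⊆ P, R.card ≤ t →
        ∃ x : Fin d → ℝ, ∀ i,
          x ∈ convexHull ℝ ((T i \ R : Finset (Fin d → ℝ)) : Set (Fin d → ℝ))) := by
  set q : ℕ := P.card / (t + 1) with hq
  set m : ℕ := (q + d) / (d + 1) with hm
  have hq1 : 1 ≤ q := (Nat.one_le_div_iff (by omega)).mpr hP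
  have hm1 : 1 ≤ m := (Nat.one_le_div_iff (by omega)).mpr (by omega)
  set c : ℕ := (d + 1) * (m - 1) + 1 with hcdef
  -- key arithmetic: c ≤ q
  have hmval : m = (q - 1) / (d + 1) + 1 := by
    have : q + d = (q - 1) + (d + 1) := by omega
    rw [hm, this, Nat.add_div_right _ (by omega)]
  have hcq : c ≤ q := by
    have h1 : (d + 1) * ((q - 1) / (d + 1)) ≤ q - 1 := Nat.mul_div_le _ _
    have : m - 1 = (q - 1) / (d + 1) := by omega
    rw [hcdef, this]; omega
  have hkc : (t + 1) * c ≤ P.card := by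
    calc (t + 1) * c ≤ (t + 1) * q := by exact Nat.mul_le_mul_left _ hcq
    _ = q * (t + 1) := Nat.mul_comm _ _
    _ ≤ P.card := Nat.div_mul_le_self _ _
  obtain ⟨S, hSP, hSc, hSd⟩ := extract_disjoint (t + 1) c P hkc
  -- apply Tverberg to each S j
  have hTvS : ∀ j : Fin (t + 1),
      ∃ T : Fin m → Finset (Fin d → ℝ),
        (∀ i i' : Fin m, i ≠ i' → Disjoint (T i) (T i')) ∧
        Finset.univ.biUnion T = S j ∧
        ∃ x : Fin d → ℝ, ∀ i : Fin m,
          x ∈ convexHull ℝ ((T i : Finset (Fin d → ℝ)) : Set (Fin d → ℝ)) :=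
    fun j => hTv m hm1 (S j) (hSc j)
  choose T' hT'd hT'cov hT'x using hTvS
  choose x hx using hT'x
  have hT'S : ∀ j i, T' j i ⊆ S j := by
    intro j i
    rw [← hT'cov j]
    exact Finset.subset_biUnion_of_mem (T' j) (Finset.mem_univ i)
  -- leftovers
  set L : Finset (Fin d → ℝ) := P \ Finset.univ.biUnion S with hL
  have hLd : ∀ j, Disjoint L (S j) := fun j =>
    (Finset.sdiff_disjoint).mono_right (Finset.subset_biUnion_of_mem S (Finset.mem_univ j))
  set i0 : Fin m := ⟨0, hm1⟩ with hi0
  set T : Fin m → Finset (Fin d → ℝ) :=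
    fun i => (if i = i0 then L else ∅) ∪ Finset.univ.biUnion (fun j => T' j i) with hT
  have hTsub : ∀ j i, T' j i ⊆ T i := by
    intro j i a ha
    exact Finset.mem_union_right _ (Finset.mem_biUnion.mpr ⟨j, Finset.mem_univ j, ha⟩)
  refine ⟨T, ?_, ?_, ?_⟩
  · -- pairwise disjoint
    intro i i' hne
    rw [hT]
    simp only [Finset.disjoint_union_left, Finset.disjoint_union_right]
    have hdbi : Disjoint (Finset.univ.biUnion fun j => T' j i)
        (Finset.univ.biUnion fun j => T' j i') := by
      rw [Finset.disjoint_biUnion_left]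
      intro j _
      rw [Finset.disjoint_biUnion_right]
      intro j' _
      by_cases hjj : j = j'
      · subst hjj; exact hT'd j i i' hne
      · exact ((hSd j j' hjj).mono (hT'S j i) (hT'S j' i'))
    have hLbi : ∀ i'', Disjoint L (Finset.univ.biUnion fun j => T' j i'') := by
      intro i''
      rw [Finset.disjoint_biUnion_right]
      intro j _
      exact (hLd j).mono_right (hT'S j i'')
    refine ⟨⟨?_, ?_⟩, ?_, hdbi⟩
    · split_ifs with h1 h2
      · exact absurd (h1.trans h2.symm) hne
      · simp
      · simp
      · simp
    · split_ifs with h1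
      · exact (hLbi i).symm
      · simp
    · split_ifs with h1
      · exact hLbi i'
      · simp
  · -- cover
    apply Finset.Subset.antisymm
    · intro a ha
      rw [Finset.mem_biUnion] at ha
      obtain ⟨i, _, hai⟩ := ha
      rw [hT] at hai
      rcases Finset.mem_union.mp hai with h | h
      · split_ifs at h with h1
        · exact (Finset.sdiff_subset) h
        · simp at h
      · obtain ⟨j, _, haj⟩ := Finset.mem_biUnion.mp h
        exact hSP j (hT'S j i haj)
    · intro a ha
      by_cases hab : a ∈ Finset.univ.biUnion S
      · obtain ⟨j, _, haj⟩ := Finset.mem_biUnion.mp hab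
        rw [← hT'cov j] at haj
        obtain ⟨i, _, hai⟩ := Finset.mem_biUnion.mp haj
        exact Finset.mem_biUnion.mpr ⟨i, Finset.mem_univ i, hTsub j i hai⟩
      · refine Finset.mem_biUnion.mpr ⟨i0, Finset.mem_univ i0, ?_⟩
        rw [hT]
        refine Finset.mem_union_left _ ?_
        simp only [if_pos rfl]
        exact Finset.mem_sdiff.mpr ⟨ha, hab⟩
  · -- tolerance
    intro R hRP hRt
    have hexj : ∃ j : Fin (t + 1), Disjoint R (S j) := by
      by_contra hcon
      push_neg at hcon
      have hpick : ∀ j : Fin (t + 1), ∃ a, a ∈ R ∧ a ∈ S j := by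
        intro j
        have := hcon j
        rw [Finset.not_disjoint_iff] at this
        exact this
      choose r hrR hrS using hpick
      have hinj : Set.InjOn r ↑(Finset.univ : Finset (Fin (t + 1))) := by
        intro j _ j' _ hrr
        by_contra hjj
        exact (Finset.disjoint_left.mp (hSd j j' hjj)) (hrS j) (hrr ▸ hrS j')
      have hcard : (Finset.univ : Finset (Fin (t + 1))).card ≤ R.card :=
        Finset.card_le_card_of_injOn r (fun j _ => hrR j) hinj
      rw [Finset.card_univ, Fintype.card_fin] at hcard
      omega
    obtain ⟨j, hjd⟩ := hexj
    refine ⟨x j, fun i => ?_⟩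
    refine convexHull_mono ?_ (hx j i)
    intro a ha
    simp only [Finset.coe_sdiff, Set.mem_diff, Finset.mem_coe]
    exact ⟨hTsub j i ha, fun haR => Finset.disjoint_left.mp hjd haR (hT'S j i ha)⟩
end
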